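/- arXiv:2107.05762 — 2 statements merged into one kernel-verified Lean document; each statement's English description precedes it below -/
import Mathlib

section
/- (Individual fairness of the causal assessment rule.) Let θ* ∈ ℝ^m with ‖θ*‖₂ = 1 and let C = {i : θ*_i ≠ 0}. Consider two agents with baseline features b, b' ∈ ℝ^m and effort conversion matrices E, E' ∈ ℝ^{m×d}, receiving predictions ŷ = bᵀθ* + θ*ᵀ(E Eᵀ)θ* + ô and ŷ' = b'ᵀθ* + θ*ᵀ(E' E'ᵀ)θ* + ô for a common offset ô ∈ ℝ. Then |ŷ − ŷ'| ≤ ‖b_C − b'_C‖₂ + ‖(E Eᵀ)_C − (E' E'ᵀ)_C‖₂, where the matrix norm is the operator norm induced by the Euclidean norm. -/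
open Matrix
open scoped Classical

/-- Restriction of a vector to an index set `C`: entries outside `C` are zeroed out. -/
noncomputable def vecRestrict {m : ℕ} (C : Set (Fin m)) (b : Fin m → ℝ) : Fin m → ℝ :=
  fun i => if i ∈ C then b i else 0

/-- Restriction of a matrix to an index set `C`: the `(i,j)` entry is kept iff
`i ∈ C` or `j ∈ C`, and zeroed out otherwise. -/
noncomputable def matRestrict {m : ℕ} (C : Set (Fin m)) (M : Matrix (Fin m) (Fin m) ℝ) :
    Matrix (Fin m) (Fin m) ℝ :=
  Matrix.of fun i j => if i ∈ C ∨ j ∈ C then M i j else 0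

/-- individual fairness of the causal rule: with `‖θ*‖₂ = 1` and
`C = {i : θ*_i ≠ 0}`, for predictions `ŷ = bᵀθ* + θ*ᵀ(EEᵀ)θ* + ô` and
`ŷ' = b'ᵀθ* + θ*ᵀ(E'E'ᵀ)θ* + ô`,
`|ŷ − ŷ'| ≤ ‖b_C − b'_C‖₂ + ‖(EEᵀ)_C − (E'E'ᵀ)_C‖_op`. -/
theorem stmt12 {m d : ℕ} (θstar : Fin m → ℝ)
    (hnorm : ‖(WithLp.equiv 2 (Fin m → ℝ)).symm θstar‖ = 1)
    (C : Set (Fin m)) (hC : C = {i | θstar i ≠ 0})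
    (b b' : Fin m → ℝ) (E E' : Matrix (Fin m) (Fin d) ℝ) (ohat : ℝ)
    (yhat yhat' : ℝ)
    (hyhat : yhat = (∑ i, b i * θstar i) +
      (∑ i, ∑ j, θstar i * (E * Eᵀ) i j * θstar j) + ohat)
    (hyhat' : yhat' = (∑ i, b' i * θstar i) +
      (∑ i, ∑ j, θstar i * (E' * E'ᵀ) i j * θstar j) + ohat) :
    |yhat - yhat'| ≤
      ‖(WithLp.equiv 2 (Fin m → ℝ)).symm (vecRestrict C b - vecRestrict C b')‖ +
      ‖Matrix.toEuclideanCLM (𝕜 := ℝ)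
        (matRestrict C (E * Eᵀ) - matRestrict C (E' * E'ᵀ))‖ := by
  have hθ : ∀ i, i ∉ C → θstar i = 0 := by
    intro i hi
    subst hC
    simpa using hi
  set θE : EuclideanSpace ℝ (Fin m) := (WithLp.equiv 2 (Fin m → ℝ)).symm θstar with hθE
  set v : Fin m → ℝ := vecRestrict C b - vecRestrict C b' with hv
  set A : Matrix (Fin m) (Fin m) ℝ :=
    matRestrict C (E * Eᵀ) - matRestrict C (E' * E'ᵀ) with hA
  set T := Matrix.toEuclideanCLM (𝕜 := ℝ) A with hT
  -- linear term
  have h1 : (∑ i, b i * θstar i) - (∑ i, b' i * θstar i) =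
      inner ℝ ((WithLp.equiv 2 (Fin m → ℝ)).symm v) θE := by
    rw [PiLp.inner_apply]
    rw [← Finset.sum_sub_distrib]
    refine Finset.sum_congr rfl fun i _ => ?_
    simp only [hv, vecRestrict, WithLp.equiv_symm_apply, PiLp.toLp_apply, Pi.sub_apply, RCLike.inner_apply,
      conj_trivial, hθE]
    by_cases hi : i ∈ C
    · simp [hi]; ring
    · simp [hi, hθ i hi]
  -- quadratic term
  have h2 : (∑ i, ∑ j, θstar i * (E * Eᵀ) i j * θstar j)
      - (∑ i, ∑ j, θstar i * (E' * E'ᵀ) i j * θstar j) = inner ℝ θE (T θE) := by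
    rw [hT, hθE, WithLp.equiv_symm_apply, Matrix.toEuclideanCLM_toLp, PiLp.inner_apply]
    simp only [WithLp.equiv_symm_apply, PiLp.toLp_apply, RCLike.inner_apply, conj_trivial, Matrix.toLin'_apply, Matrix.mulVec,
      dotProduct]
    rw [← Finset.sum_sub_distrib]
    refine Finset.sum_congr rfl fun i _ => ?_
    rw [← Finset.sum_sub_distrib, Finset.sum_mul]
    refine Finset.sum_congr rfl fun j _ => ?_
    by_cases hi : i ∈ C
    · simp only [hA, Matrix.sub_apply, matRestrict, Matrix.of_apply, hi, true_or, if_pos]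
      ring
    · by_cases hj : j ∈ C
      · simp only [hA, Matrix.sub_apply, matRestrict, Matrix.of_apply, hj, or_true, if_pos]
        ring
      · simp [hθ i hi, hA, matRestrict, hi, hj]
  have key : yhat - yhat' = inner ℝ ((WithLp.equiv 2 (Fin m → ℝ)).symm v) θE
      + inner ℝ θE (T θE) := by
    rw [hyhat, hyhat', ← h1, ← h2]; ring
  rw [key]
  calc |inner ℝ ((WithLp.equiv 2 (Fin m → ℝ)).symm v) θE + (inner ℝ θE (T θE) : ℝ)|
      ≤ |(inner ℝ ((WithLp.equiv 2 (Fin m → ℝ)).symm v) θE : ℝ)| + |(inner ℝ θE (T θE) : ℝ)| :=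
        abs_add_le _ _
    _ ≤ ‖(WithLp.equiv 2 (Fin m → ℝ)).symm v‖ * ‖θE‖ + ‖θE‖ * ‖T θE‖ :=
        add_le_add (abs_real_inner_le_norm _ _) (abs_real_inner_le_norm _ _)
    _ ≤ ‖(WithLp.equiv 2 (Fin m → ℝ)).symm v‖ * 1 + 1 * (‖T‖ * ‖θE‖) := by
        gcongr
        · exact hnorm.le
        · exact hnorm.le
        · exact T.le_opNorm θE
    _ = ‖(WithLp.equiv 2 (Fin m → ℝ)).symm v‖ + ‖T‖ := by
        rw [hnorm]; ring
end

section
/- (Example: exact prediction gap.) Let n be even, let θ* ∈ ℝ^n have θ*_i = 0 for i ≤ n/2 and θ*_i = √(2/n) for i > n/2, and set C = {n/2+1,…,n}. Let b = b' ∈ ℝ^n, E = diag(δ) and E' = diag(δ') with δ_i = √n for i ≤ n/2 and δ_i = 1 for i > n/2, and δ'_i = 0 for i ≤ n/2 and δ'_i = 1 for i > n/2. Then b_C = b'_C and (E Eᵀ)_C = (E' E'ᵀ)_C, and for every θ ∈ ℝ^n, the predictions ŷ = bᵀθ + θᵀ(E Eᵀ)θ + ô and ŷ' = b'ᵀθ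 + θᵀ(E' E'ᵀ)θ + ô satisfy |ŷ − ŷ'| = n Σ_{i=1}^{n/2} θ_i². -/
open Matrix
open scoped Classical

/-- example: exact prediction gap: with `n` even,
`θ*_i = 0` for `i` in the first half and `θ*_i = √(2/n)` otherwise,
`C` the second half of the indices, `b = b'`, `E = diag(δ)` and `E' = diag(δ')` with
`δ_i = √n, δ'_i = 0` on the first half and `δ_i = δ'_i = 1` on the second half, one has
`b_C = b'_C`, `(EEᵀ)_C = (E'E'ᵀ)_C`, and for every rule `θ` and offset `ô` the
predictions satisfy `|ŷ − ŷ'| = n Σ_{i ≤ n/2} θ_i²`. -/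
theorem stmt14 {n : ℕ} (hn : Even n)
    (θstar : Fin n → ℝ)
    (hθstar : ∀ i : Fin n, θstar i =
      if (i : ℕ) < n / 2 then 0 else Real.sqrt (2 / (n : ℝ)))
    (C : Set (Fin n)) (hC : C = {i : Fin n | ¬ ((i : ℕ) < n / 2)})
    (b b' : Fin n → ℝ) (hb : b = b')
    (dl dl' : Fin n → ℝ)
    (hdl : ∀ i : Fin n, dl i = if (i : ℕ) < n / 2 then Real.sqrt n else 1)
    (hdl' : ∀ i : Fin n, dl' i = if (i : ℕ) < n / 2 then 0 else 1)
    (E E' : Matrix (Fin n) (Fin n) ℝ)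
    (hE : E = Matrix.diagonal dl) (hE' : E' = Matrix.diagonal dl') :
    vecRestrict C b = vecRestrict C b' ∧
    matRestrict C (E * Eᵀ) = matRestrict C (E' * E'ᵀ) ∧
    ∀ (θ : Fin n → ℝ) (ohat : ℝ),
      |(((∑ i, b i * θ i) + (∑ i, ∑ j, θ i * (E * Eᵀ) i j * θ j) + ohat) -
        ((∑ i, b' i * θ i) + (∑ i, ∑ j, θ i * (E' * E'ᵀ) i j * θ j) + ohat))| =
        n * ∑ i ∈ Finset.univ.filter (fun i : Fin n => (i : ℕ) < n / 2), (θ i) ^ 2 := by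
  subst hb hE hE' hC
  have hdE : Matrix.diagonal dl * (Matrix.diagonal dl)ᵀ = Matrix.diagonal (fun i => dl i * dl i) := by
    rw [Matrix.diagonal_transpose, Matrix.diagonal_mul_diagonal]
  have hdE' : Matrix.diagonal dl' * (Matrix.diagonal dl')ᵀ = Matrix.diagonal (fun i => dl' i * dl' i) := by
    rw [Matrix.diagonal_transpose, Matrix.diagonal_mul_diagonal]
  refine ⟨rfl, ?_, ?_⟩
  · rw [hdE, hdE']
    ext i j
    simp only [matRestrict, Matrix.of_apply, Matrix.diagonal_apply]
    by_cases hij : i = j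
    · subst hij
      by_cases h : (i : ℕ) < n / 2
      · simp [Set.mem_setOf_eq, h, Nat.not_le.mpr h]
      · simp [Set.mem_setOf_eq, h, hdl i, hdl' i]
    · simp [hij]
  · intro θ ohat
    rw [hdE, hdE']
    have hsum : ∀ d : Fin n → ℝ, (∑ i, ∑ j, θ i * Matrix.diagonal (fun i => d i * d i) i j * θ j)
        = ∑ i, θ i ^ 2 * (d i)^2 := by
      intro d
      refine Finset.sum_congr rfl fun i _ => ?_
      rw [Finset.sum_eq_single i]
      · simp [Matrix.diagonal_apply_eq]; ring
      · intro j _ hj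
        simp [Matrix.diagonal_apply_ne' _ hj]
      · simp
    rw [hsum, hsum]
    have : (∑ i, θ i ^ 2 * dl i ^ 2) - (∑ i, θ i ^ 2 * dl' i ^ 2)
        = ∑ i ∈ Finset.univ.filter (fun i : Fin n => (i : ℕ) < n / 2), (n : ℝ) * θ i ^ 2 := by
      rw [← Finset.sum_sub_distrib]
      rw [← Finset.sum_filter_add_sum_filter_not Finset.univ (fun i : Fin n => (i : ℕ) < n / 2)
        (fun i => θ i ^ 2 * dl i ^ 2 - θ i ^ 2 * dl' i ^ 2)]
      have h1 : ∀ i ∈ Finset.univ.filter (fun i : Fin n => (i : ℕ) < n / 2),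
          θ i ^ 2 * dl i ^ 2 - θ i ^ 2 * dl' i ^ 2 = (n : ℝ) * θ i ^ 2 := by
        intro i hi
        simp only [Finset.mem_filter] at hi
        rw [hdl i, hdl' i, if_pos hi.2, if_pos hi.2,
          Real.sq_sqrt (by positivity : (0:ℝ) ≤ (n:ℝ))]
        ring
      have h2 : ∀ i ∈ Finset.univ.filter (fun i : Fin n => ¬ (i : ℕ) < n / 2),
          θ i ^ 2 * dl i ^ 2 - θ i ^ 2 * dl' i ^ 2 = 0 := by
        intro i hi
        simp only [Finset.mem_filter] at hi
        rw [hdl i, hdl' i, if_neg hi.2, if_neg hi.2]; ring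
      rw [Finset.sum_congr rfl h1, Finset.sum_congr rfl h2, Finset.sum_const_zero, add_zero]
    have hrw : ((∑ i, b i * θ i) + (∑ i, θ i ^ 2 * dl i ^ 2) + ohat) -
        ((∑ i, b i * θ i) + (∑ i, θ i ^ 2 * dl' i ^ 2) + ohat)
        = (∑ i, θ i ^ 2 * dl i ^ 2) - (∑ i, θ i ^ 2 * dl' i ^ 2) := by ring
    rw [hrw, this, ← Finset.mul_sum]
    exact abs_of_nonneg (by positivity)
end
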